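/- Let T be an increasing tableau of shape ν/λ, R an increasing tableau of straight shape λ, and a ∈ ℕ. Let A be the subtableau of T with entries in {1,…,a} and B = T \ A the rest. Then K-infusion₁(R,T) = K-infusion₁(R,A) ∪ K-infusion₁(K-infusion₂(R,A), B). -/

import Mathlib

open Finset
open scoped Classical

/-- A box of a Young diagram: (row, column), rows increasing downward. -/
abbrev Box : Type := ℕ × ℕ

/-- A Young diagram: a finite lower set in both coordinates. -/
def IsYoung (μ : Finset Box) : Prop :=
  (∀ r c : ℕ, (r + 1, c) ∈ μ → (r, c) ∈ μ) ∧
  (∀ r c : ℕ, (r, c + 1) ∈ μ → (r, c) ∈ μ)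

/-- Two boxes are adjacent (share an edge). -/
def adjB (a b : Box) : Prop :=
  (a.1 = b.1 ∧ (a.2 + 1 = b.2 ∨ b.2 + 1 = a.2)) ∨
  (a.2 = b.2 ∧ (a.1 + 1 = b.1 ∨ b.1 + 1 = a.1))

/-- Connectivity within a finite set of boxes. -/
def conn (S : Finset Box) (a b : Box) : Prop :=
  Relation.ReflTransGen (fun x y => x ∈ S ∧ y ∈ S ∧ adjB x y) a b

/-- Entries strictly increase along rows and columns. -/
def IncreasingOn (dom : Finset Box) (f : Box → ℕ) : Prop :=
  (∀ r c : ℕ, (r, c) ∈ dom → (r, c + 1) ∈ dom → f (r, c) < f (r, c + 1)) ∧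
  (∀ r c : ℕ, (r, c) ∈ dom → (r + 1, c) ∈ dom → f (r, c) < f (r + 1, c))

def maxEntry (dom : Finset Box) (f : Box → ℕ) : ℕ := dom.sup f

/-- An increasing tableau: positive entries, strictly increasing along rows and
columns, and every value `1,…,max` appears at least once. -/
def IsIncTab (dom : Finset Box) (f : Box → ℕ) : Prop :=
  IncreasingOn dom f ∧ (∀ b ∈ dom, 1 ≤ f b) ∧
  (∀ v : ℕ, 1 ≤ v → v ≤ maxEntry dom f → ∃ b ∈ dom, f b = v)

/-- A standard Young tableau: an increasing tableau with distinct entries. -/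
def IsSYT (dom : Finset Box) (f : Box → ℕ) : Prop :=
  IsIncTab dom f ∧ ∀ a ∈ dom, ∀ b ∈ dom, f a = f b → a = b

/-- An inner corner of `λ`: a maximally southeast box of `λ`. -/
def InnerCorner (lam : Finset Box) (x : Box) : Prop :=
  x ∈ lam ∧ (x.1 + 1, x.2) ∉ lam ∧ (x.1, x.2 + 1) ∉ lam

/-- An outer corner of `ν`: a maximally northwest box outside `ν`. -/
def OuterCorner (nu : Finset Box) (x : Box) : Prop :=
  x ∉ nu ∧ (x.1 = 0 ∨ (x.1 - 1, x.2) ∈ nu) ∧ (x.2 = 0 ∨ (x.1, x.2 - 1) ∈ nu)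

/-- No two boxes of `A` share a row or a column. -/
def NoTwoSameRowCol (A : Finset Box) : Prop :=
  ∀ a ∈ A, ∀ b ∈ A, a ≠ b → a.1 ≠ b.1 ∧ a.2 ≠ b.2

/-- One `switch` stage of a K-jdt slide: in the union of ribbons formed by the
•-boxes (`st.1`) and the boxes of the numerical region `st.2.1` with entry `i`,
swap the two symbols on every connected component with at least two boxes
(single-box components are unchanged).  The state is (dots, numerical domain,
numerical entries). -/
noncomputable def switchStep (st : Finset Box × Finset Box × (Box → ℕ)) (i : ℕ) :
    Finset Box × Finset Box × (Box → ℕ) :=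
  let dots := st.1
  let dom := st.2.1
  let f := st.2.2
  let S : Finset Box := dots ∪ dom.filter (fun b => f b = i)
  let sw : Box → Prop := fun b => ∃ b' ∈ S, b' ≠ b ∧ conn S b b'
  ( dom.filter (fun b => f b = i ∧ sw b) ∪ dots.filter (fun b => ¬ sw b),
    dom.filter (fun b => ¬ (f b = i ∧ sw b)) ∪ dots.filter sw,
    fun b => if b ∈ dots ∧ sw b then i else f b )

/-- The state of a K-jdt slide started with •'s at `xs`, after processing the
values `1, 2, …, m`. -/
noncomputable def KState (xs dom : Finset Box) (f : Box → ℕ) (m : ℕ) :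
    Finset Box × Finset Box × (Box → ℕ) :=
  (List.range m).foldl (fun st i => switchStep st (i + 1)) (xs, dom, f)

/-- The K-theoretic jeu de taquin slide of the tableau `(dom, f)` into the set
`xs` of inner corners: process the values `1,…,max` and discard the final •'s. -/
noncomputable def KJdt (xs dom : Finset Box) (f : Box → ℕ) : Finset Box × (Box → ℕ) :=
  ((KState xs dom f (maxEntry dom f)).2.1, (KState xs dom f (maxEntry dom f)).2.2)

/-- The state of a reverse K-jdt slide: •'s start at `xs` (outer corners) and the
values `m, m-1, …, 1` are processed in decreasing order. -/
noncomputable def KRevState (xs dom : Finset Box) (f : Box → ℕ) (m : ℕ) :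
    Finset Box × Finset Box × (Box → ℕ) :=
  (List.range m).foldr (fun i st => switchStep st (i + 1)) (xs, dom, f)

/-- A slide applied to the state (inner shape `λ`, tableau domain, entries). -/
noncomputable def doSlide (st : Finset Box × Finset Box × (Box → ℕ)) (xs : Finset Box) :
    Finset Box × Finset Box × (Box → ℕ) :=
  (st.1 \ xs, (KJdt xs st.2.1 st.2.2).1, (KJdt xs st.2.1 st.2.2).2)

/-- A reverse slide applied to the state (inner shape `λ`, tableau domain, entries). -/
noncomputable def doRevSlide (st : Finset Box × Finset Box × (Box → ℕ)) (xs : Finset Box) :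
    Finset Box × Finset Box × (Box → ℕ) :=
  (st.1 \ (KRevState xs st.2.1 st.2.2 (maxEntry st.2.1 st.2.2)).1,
   (KRevState xs st.2.1 st.2.2 (maxEntry st.2.1 st.2.2)).2.1,
   (KRevState xs st.2.1 st.2.2 (maxEntry st.2.1 st.2.2)).2.2)

/-- One step of a rectification: a K-jdt slide into a nonempty set of inner corners. -/
def RectStep (p q : Finset Box × Finset Box × (Box → ℕ)) : Prop :=
  ∃ xs : Finset Box, xs.Nonempty ∧ (∀ x ∈ xs, InnerCorner p.1 x) ∧ q = doSlide p xs

/-- The tableau `(dom, f)` of shape `ν/λ` admits a rectification order ending at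
the straight-shape tableau `(dom', f')`. -/
def RectTo (lam dom : Finset Box) (f : Box → ℕ) (dom' : Finset Box) (f' : Box → ℕ) : Prop :=
  ∃ g : Box → ℕ, Relation.ReflTransGen RectStep (lam, dom, f) (∅, dom', g) ∧
    ∀ b ∈ dom', g b = f' b

def rowLen (μ : Finset Box) (r : ℕ) : ℕ := (μ.filter (fun b => b.1 = r)).card

/-- The superstandard tableau of straight shape `μ`: rows filled consecutively. -/
def sstd (μ : Finset Box) : Box → ℕ :=
  fun b => (∑ i ∈ Finset.range b.1, rowLen μ i) + b.2 + 1

/-- `a` occurs before `b` in the reading word (rows left to right, bottom to top). -/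
def ReadBefore (a b : Box) : Prop := b.1 < a.1 ∨ (a.1 = b.1 ∧ a.2 < b.2)

/-- Length of the longest strictly increasing subsequence of the reading word. -/
noncomputable def LIS (dom : Finset Box) (f : Box → ℕ) : ℕ :=
  (dom.powerset.filter
    (fun I => ∀ a ∈ I, ∀ b ∈ I, ReadBefore a b → f a < f b)).sup Finset.card

/-- One step of K-infusion: slide the boxes carrying the largest label `m` of the
inner tableau through the outer tableau, recording `m` at the vacated holes. -/
noncomputable def infusionStep
    (st : (Finset Box × (Box → ℕ)) × (Finset Box × (Box → ℕ)) × (Finset Box × (Box → ℕ))) :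
    (Finset Box × (Box → ℕ)) × (Finset Box × (Box → ℕ)) × (Finset Box × (Box → ℕ)) :=
  let m := maxEntry st.1.1 st.1.2
  let xs := st.1.1.filter (fun b => st.1.2 b = m)
  let ks := KState xs st.2.1.1 st.2.1.2 (maxEntry st.2.1.1 st.2.1.2)
  ( (st.1.1 \ xs, st.1.2),
    (ks.2.1, ks.2.2),
    (st.2.2.1 ∪ ks.1, fun b => if b ∈ ks.1 then m else st.2.2.2 b) )

/-- K-infusion of the pair `(T, U)`, where `U`'s shape extends `T`'s shape:
returns `(K-infusion₁(T,U), K-infusion₂(T,U))`. -/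
noncomputable def KInfusion (Tdom : Finset Box) (Tf : Box → ℕ)
    (Udom : Finset Box) (Uf : Box → ℕ) :
    (Finset Box × (Box → ℕ)) × (Finset Box × (Box → ℕ)) :=
  ((infusionStep^[maxEntry Tdom Tf] ((Tdom, Tf), (Udom, Uf), (∅, fun _ => 0))).2.1,
   (infusionStep^[maxEntry Tdom Tf] ((Tdom, Tf), (Udom, Uf), (∅, fun _ => 0))).2.2)

/-- `Δ(T)`: erase the entry `1` at the northwest corner, subtract one from the
remaining entries, and slide into the vacated corner. -/
noncomputable def Delta (p : Finset Box × (Box → ℕ)) : Finset Box × (Box → ℕ) :=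
  KJdt {((0 : ℕ), (0 : ℕ))} (p.1.erase (0, 0)) (fun b => p.2 b - 1)

/-- K-evacuation: box `b` receives label `i` when `b` belongs to the shape of
`Δ^{i-1}(T)` but not to the shape of `Δ^{i}(T)`. -/
noncomputable def Kevac (p : Finset Box × (Box → ℕ)) : Box → ℕ :=
  fun b => sInf {i : ℕ | b ∉ (Delta^[i] p).1}

/-- A horizontal strip: no two boxes in the same column. -/
def HorizontalStrip (dom : Finset Box) : Prop :=
  ∀ a ∈ dom, ∀ b ∈ dom, a ≠ b → a.2 ≠ b.2

def LeftmostIn (dom : Finset Box) (r c : ℕ) : Prop :=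
  (r, c) ∈ dom ∧ ∀ c' < c, (r, c') ∉ dom

def RightmostIn (dom : Finset Box) (r c : ℕ) : Prop :=
  (r, c) ∈ dom ∧ ∀ c' > c, (r, c') ∉ dom

/-- A `t`-Pieri filling of a horizontal strip: entries of each row consecutive,
the bottom row starts with `1`, each other row starts with the last entry of the
next nonempty row below it, or with that entry plus one; entries are `1,…,t`. -/
def IsPieri (dom : Finset Box) (f : Box → ℕ) (t : ℕ) : Prop :=
  HorizontalStrip dom ∧
  (∀ r c : ℕ, (r, c) ∈ dom → (r, c + 1) ∈ dom → f (r, c + 1) = f (r, c) + 1) ∧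
  (∀ r c : ℕ, LeftmostIn dom r c → (∀ b ∈ dom, b.1 ≤ r) → f (r, c) = 1) ∧
  (∀ r c r' c' : ℕ, LeftmostIn dom r c → RightmostIn dom r' c' → r < r' →
    (∀ b ∈ dom, ¬ (r < b.1 ∧ b.1 < r')) →
    (f (r, c) = f (r', c') ∨ f (r, c) = f (r', c') + 1)) ∧
  (∀ b ∈ dom, 1 ≤ f b ∧ f b ≤ t) ∧ (dom.Nonempty → ∃ b ∈ dom, f b = t)

/-- The domain of the one-row shape `(t)`. -/
def rowDom (t : ℕ) : Finset Box := (Finset.range t).image (fun c => ((0 : ℕ), c))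

/-- The entries of the superstandard one-row tableau `S_(t)`. -/
def rowEnt : Box → ℕ := fun b => b.2 + 1

def numRows (dom : Finset Box) : ℕ := (dom.image Prod.fst).card

/-- The number of increasing tableaux of shape `ν/λ` whose K-rectification (for
some, equivalently by Theorem 1 any, rectification order) is the superstandard
tableau `S_μ`.  Tableaux are normalized to vanish off their domain. -/
noncomputable def KrectCount (lam nu mu : Finset Box) : ℕ :=
  Set.ncard {f : Box → ℕ | (∀ b, b ∉ nu \ lam → f b = 0) ∧ IsIncTab (nu \ lam) f ∧
    ∃ g, Relation.ReflTransGen RectStep (lam, nu \ lam, f) (∅, mu, g) ∧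
      ∀ b ∈ mu, g b = sstd mu b}

/-- Apply a (forward or reverse) K-jdt slide, as specified by `mv`. -/
noncomputable def applyMove (st : Finset Box × Finset Box × (Box → ℕ))
    (mv : Bool × Finset Box) : Finset Box × Finset Box × (Box → ℕ) :=
  if mv.1 then doSlide st mv.2 else doRevSlide st mv.2

def ValidMove (st : Finset Box × Finset Box × (Box → ℕ)) (mv : Bool × Finset Box) : Prop :=
  mv.2.Nonempty ∧ (mv.1 = true → ∀ x ∈ mv.2, InnerCorner st.1 x) ∧
    (mv.1 = false → ∀ x ∈ mv.2, OuterCorner (st.1 ∪ st.2.1) x)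

noncomputable def applySeq (L : List (Bool × Finset Box))
    (st : Finset Box × Finset Box × (Box → ℕ)) : Finset Box × Finset Box × (Box → ℕ) :=
  L.foldl applyMove st

def ValidSeq : List (Bool × Finset Box) → (Finset Box × Finset Box × (Box → ℕ)) → Prop
  | [], _ => True
  | mv :: L, st => ValidMove st mv ∧ ValidSeq L (applyMove st mv)

/-- K-dual equivalence: every common sequence of (forward or reverse) slides
produces tableaux of the same shape. -/
def KDualEquiv (lam dom : Finset Box) (f g : Box → ℕ) : Prop :=
  ∀ L : List (Bool × Finset Box),
    ValidSeq L (lam, dom, f) → ValidSeq L (lam, dom, g) →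
    (applySeq L (lam, dom, f)).2.1 = (applySeq L (lam, dom, g)).2.1


namespace Stmt13

abbrev St : Type := Finset Box × Finset Box × (Box → ℕ)

/-- The union of dots and current value-`i` boxes. -/
def S0 (st : St) (i : ℕ) : Finset Box := st.1 ∪ st.2.1.filter (fun b => st.2.2 b = i)

/-- The swap predicate used in `switchStep`. -/
def swS (S : Finset Box) (b : Box) : Prop := ∃ b' ∈ S, b' ≠ b ∧ conn S b b'

lemma switchStep_eq (st : St) (i : ℕ) :
    switchStep st i =
      (st.2.1.filter (fun b => st.2.2 b = i ∧ swS (S0 st i) b) ∪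
         st.1.filter (fun b => ¬ swS (S0 st i) b),
       st.2.1.filter (fun b => ¬ (st.2.2 b = i ∧ swS (S0 st i) b)) ∪
         st.1.filter (fun b => swS (S0 st i) b),
       fun b => if b ∈ st.1 ∧ swS (S0 st i) b then i else st.2.2 b) := by
  simp only [switchStep]
  refine Prod.ext ?_ (Prod.ext ?_ ?_)
  · ext b; simp only [Finset.mem_union, Finset.mem_filter, S0, swS]
  · ext b; simp only [Finset.mem_union, Finset.mem_filter, S0, swS]
  · funext b; exact if_congr Iff.rfl rfl rfl

lemma adjB_symm {x y : Box} (h : adjB x y) : adjB y x := by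
  rcases h with ⟨h1, h2⟩ | ⟨h1, h2⟩
  · exact Or.inl ⟨h1.symm, h2.symm⟩
  · exact Or.inr ⟨h1.symm, h2.symm⟩

lemma adjB_irrefl (x : Box) : ¬ adjB x x := by
  rintro (⟨h1, h2 | h2⟩ | ⟨h1, h2 | h2⟩) <;> omega

/-- No two (distinct) boxes of `S` are adjacent. -/
def Nonadj (S : Finset Box) : Prop := ∀ x ∈ S, ∀ y ∈ S, ¬ adjB x y

lemma Nonadj.mono {S T : Finset Box} (h : Nonadj T) (hsub : S ⊆ T) : Nonadj S :=
  fun x hx y hy => h x (hsub hx) y (hsub hy)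

lemma conn_symm {S : Finset Box} {x y : Box} (h : conn S x y) : conn S y x := by
  refine (@Relation.ReflTransGen.stdSymm _ _ ⟨?_⟩).symm _ _ h
  intro u v ⟨h1, h2, h3⟩
  exact ⟨h2, h1, adjB_symm h3⟩

lemma conn_eq_of_nonadj {S : Finset Box} (hS : Nonadj S) {x y : Box} (h : conn S x y) :
    x = y := by
  induction h with
  | refl => rfl
  | tail _ h ih => exact absurd h.2.2 (hS _ h.1 _ h.2.1)

lemma conn_single {S : Finset Box} {x y : Box} (hx : x ∈ S) (hy : y ∈ S) (h : adjB x y) :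
    conn S x y := Relation.ReflTransGen.single ⟨hx, hy, h⟩

/-- Invariants preserved along a K-jdt slide. -/
structure Inv (st : St) : Prop where
  disj : Disjoint st.1 st.2.1
  dots : Nonadj st.1
  level : ∀ i, Nonadj (st.2.1.filter (fun b => st.2.2 b = i))

lemma mem_S0_dots {st : St} {i : ℕ} {b : Box} (hb : b ∈ st.1) : b ∈ S0 st i :=
  Finset.mem_union_left _ hb

lemma mem_S0_dom {st : St} {i : ℕ} {b : Box} (hb : b ∈ st.2.1) (hfb : st.2.2 b = i) :
    b ∈ S0 st i := Finset.mem_union_right _ (Finset.mem_filter.2 ⟨hb, hfb⟩)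

lemma Inv.switch {st : St} (h : Inv st) (i : ℕ) : Inv (switchStep st i) := by
  obtain ⟨hdisj, hdots, hlev⟩ := h
  have hdd : ∀ {b : Box}, b ∈ st.1 → b ∈ st.2.1 → False := fun h1 h2 =>
    Finset.disjoint_left.1 hdisj h1 h2
  rw [switchStep_eq]
  constructor
  · -- disjointness
    rw [Finset.disjoint_left]
    intro b hb hb'
    simp only [Finset.mem_union, Finset.mem_filter] at hb hb'
    rcases hb with ⟨hD, hc⟩ | ⟨hd, hs⟩ <;> rcases hb' with ⟨hD', hc'⟩ | ⟨hd', hs'⟩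
    · exact hc' hc
    · exact hdd hd' hD
    · exact hdd hd hD'
    · exact hs hs'
  · -- new dots nonadjacent
    intro x hx y hy hadj
    simp only [Finset.mem_union, Finset.mem_filter] at hx hy
    rcases hx with ⟨hxD, hxf, hxsw⟩ | ⟨hxd, hxsw⟩ <;>
      rcases hy with ⟨hyD, hyf, hysw⟩ | ⟨hyd, hysw⟩
    · exact hlev i x (Finset.mem_filter.2 ⟨hxD, hxf⟩) y (Finset.mem_filter.2 ⟨hyD, hyf⟩) hadj
    · exact hysw ⟨x, mem_S0_dom hxD hxf, (fun he => hdd (he ▸ hyd) hxD),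
        conn_single (mem_S0_dots hyd) (mem_S0_dom hxD hxf) (adjB_symm hadj)⟩
    · exact hxsw ⟨y, mem_S0_dom hyD hyf, (fun he => hdd (he ▸ hxd) hyD),
        conn_single (mem_S0_dots hxd) (mem_S0_dom hyD hyf) hadj⟩
    · exact hdots x hxd y hyd hadj
  · -- new levels nonadjacent
    intro j x hx y hy hadj
    simp only [Finset.mem_filter, Finset.mem_union] at hx hy
    obtain ⟨hx1, hx2⟩ := hx
    obtain ⟨hy1, hy2⟩ := hy
    rcases hx1 with ⟨hxD, hxc⟩ | ⟨hxd, hxsw⟩ <;>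
      rcases hy1 with ⟨hyD, hyc⟩ | ⟨hyd, hysw⟩
    · rw [if_neg (fun hc => hdd hc.1 hxD)] at hx2
      rw [if_neg (fun hc => hdd hc.1 hyD)] at hy2
      exact hlev j x (Finset.mem_filter.2 ⟨hxD, hx2⟩) y (Finset.mem_filter.2 ⟨hyD, hy2⟩) hadj
    · rw [if_pos ⟨hyd, hysw⟩] at hy2
      rw [if_neg (fun hc => hdd hc.1 hxD)] at hx2
      apply hxc
      rw [← hy2] at hx2
      refine ⟨hx2, y, mem_S0_dots hyd, (fun he => hdd (he ▸ hyd) hxD), ?_⟩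
      exact conn_single (mem_S0_dom hxD hx2) (mem_S0_dots hyd) hadj
    · rw [if_pos ⟨hxd, hxsw⟩] at hx2
      rw [if_neg (fun hc => hdd hc.1 hyD)] at hy2
      apply hyc
      rw [← hx2] at hy2
      refine ⟨hy2, x, mem_S0_dots hxd, (fun he => hdd (he ▸ hxd) hyD), ?_⟩
      exact conn_single (mem_S0_dom hyD hy2) (mem_S0_dots hxd) (adjB_symm hadj)
    · exact hdots x hxd y hyd hadj

end Stmt13
namespace Stmt13

lemma swS_false {st : St} {i : ℕ} (hInv : Inv st)
    (h : ∀ b ∈ st.2.1, st.2.2 b ≠ i) (b : Box) : ¬ swS (S0 st i) b := by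
  have hS : S0 st i = st.1 := by
    rw [S0, Finset.filter_false_of_mem h, Finset.union_empty]
  rintro ⟨b', hb', hne, hc⟩
  rw [hS] at hb' hc
  exact hne (conn_eq_of_nonadj hInv.dots hc).symm

lemma switchStep_id {st : St} {i : ℕ} (hInv : Inv st) (h : ∀ b ∈ st.2.1, st.2.2 b ≠ i) :
    switchStep st i = st := by
  have hsw := swS_false hInv h
  rw [switchStep_eq]
  refine Prod.ext ?_ (Prod.ext ?_ ?_)
  · show _ ∪ _ = st.1
    rw [Finset.filter_false_of_mem (fun x hx hc => h x hx hc.1),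
        Finset.filter_true_of_mem (fun x _ => hsw x), Finset.empty_union]
  · show _ ∪ _ = st.2.1
    have ht : ∀ x ∈ st.2.1, ¬ (st.2.2 x = i ∧ swS (S0 st i) x) := fun x hx hc => h x hx hc.1
    rw [Finset.filter_true_of_mem ht,
        Finset.filter_false_of_mem (fun x _ => hsw x), Finset.union_empty]
  · funext b
    show ite _ _ _ = _
    rw [if_neg (fun hc => hsw b hc.2)]

lemma switchStep_low {d P Q : Finset Box} {f : Box → ℕ} {i a : ℕ}
    (hi : i ≤ a) (hQ : ∀ b ∈ Q, a < f b) :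
    switchStep (d, P ∪ Q, f) i =
      ((switchStep (d, P, f) i).1, (switchStep (d, P, f) i).2.1 ∪ Q,
        (switchStep (d, P, f) i).2.2) := by
  have hQne : ∀ b ∈ Q, ¬ ((d, P ∪ Q, f).2.2 b = i) := fun b hb he => by
    have := hQ b hb; simp only at he; omega
  have hS : S0 (d, P ∪ Q, f) i = S0 (d, P, f) i := by
    simp only [S0, Finset.filter_union]
    rw [Finset.filter_false_of_mem hQne, Finset.union_empty]
  simp only [switchStep_eq, hS]
  refine Prod.ext ?_ (Prod.ext ?_ rfl)
  · show _ ∪ _ = _ ∪ _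
    rw [Finset.filter_union, Finset.filter_false_of_mem (fun b hb hc => hQne b hb hc.1),
      Finset.union_empty]
  · show _ ∪ _ = _ ∪ _
    have ht : ∀ x ∈ Q, ¬ (f x = i ∧ swS (S0 (d, P, f) i) x) := fun x hx hc => hQne x hx hc.1
    rw [Finset.filter_union, Finset.filter_true_of_mem ht, Finset.union_right_comm]

lemma switchStep_high {d P Q : Finset Box} {f : Box → ℕ} {i a : ℕ}
    (hi : a < i) (hP : ∀ b ∈ P, f b ≤ a) :
    switchStep (d, P ∪ Q, f) i =
      ((switchStep (d, Q, f) i).1, P ∪ (switchStep (d, Q, f) i).2.1,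
        (switchStep (d, Q, f) i).2.2) := by
  have hPne : ∀ b ∈ P, ¬ ((d, P ∪ Q, f).2.2 b = i) := fun b hb he => by
    have := hP b hb; simp only at he; omega
  have hS : S0 (d, P ∪ Q, f) i = S0 (d, Q, f) i := by
    simp only [S0, Finset.filter_union]
    rw [Finset.filter_false_of_mem hPne, Finset.empty_union]
  simp only [switchStep_eq, hS]
  refine Prod.ext ?_ (Prod.ext ?_ rfl)
  · show _ ∪ _ = _ ∪ _
    rw [Finset.filter_union, Finset.filter_false_of_mem (fun b hb hc => hPne b hb hc.1),
      Finset.empty_union]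
  · show _ ∪ _ = _ ∪ _
    have ht : ∀ x ∈ P, ¬ (f x = i ∧ swS (S0 (d, Q, f) i) x) := fun x hx hc => hPne x hx hc.1
    rw [Finset.filter_union, Finset.filter_true_of_mem ht, Finset.union_assoc]

lemma switch_sub (st : St) (i : ℕ) :
    (switchStep st i).1 ∪ (switchStep st i).2.1 ⊆ st.1 ∪ st.2.1 := by
  rw [switchStep_eq]
  intro b hb
  simp only [Finset.mem_union, Finset.mem_filter] at hb ⊢
  tauto

lemma switch_out {st : St} {i : ℕ} {b : Box} (hb : b ∉ st.1) :
    (switchStep st i).2.2 b = st.2.2 b := by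
  rw [switchStep_eq]
  exact if_neg (fun hc => hb hc.1)

lemma switch_bound {st : St} {i c : ℕ} (h : ∀ b ∈ st.2.1, st.2.2 b ≤ c) (hi : i ≤ c) :
    ∀ b ∈ (switchStep st i).2.1, (switchStep st i).2.2 b ≤ c := by
  intro b hb
  rw [switchStep_eq] at hb ⊢
  simp only [Finset.mem_union, Finset.mem_filter] at hb
  show ite _ _ _ ≤ c
  split_ifs with hc
  · exact hi
  · rcases hb with ⟨hbD, _⟩ | ⟨hbd, hsw⟩
    · exact h b hbD
    · exact absurd ⟨hbd, hsw⟩ hc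

lemma switch_lb {st : St} {i c : ℕ} (h : ∀ b ∈ st.2.1, c < st.2.2 b) (hi : c < i) :
    ∀ b ∈ (switchStep st i).2.1, c < (switchStep st i).2.2 b := by
  intro b hb
  rw [switchStep_eq] at hb ⊢
  simp only [Finset.mem_union, Finset.mem_filter] at hb
  show c < ite _ _ _
  split_ifs with hc
  · exact hi
  · rcases hb with ⟨hbD, _⟩ | ⟨hbd, hsw⟩
    · exact h b hbD
    · exact absurd ⟨hbd, hsw⟩ hc

lemma switch_dots_nonempty {st : St} (hInv : Inv st) (h : st.1.Nonempty) (i : ℕ) :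
    (switchStep st i).1.Nonempty := by
  obtain ⟨b, hb⟩ := h
  by_cases hsw : swS (S0 st i) b
  · obtain ⟨b', hb', hne, hc⟩ := hsw
    rcases Relation.ReflTransGen.cases_head hc with rfl | ⟨y, ⟨hbS, hyS, hadj⟩, _⟩
    · exact absurd rfl hne
    · rcases Finset.mem_union.1 hyS with hyd | hyD
      · exact absurd hadj (hInv.dots b hb y hyd)
      · have hy := Finset.mem_filter.1 hyD
        refine ⟨y, ?_⟩
        rw [switchStep_eq]
        refine Finset.mem_union_left _ (Finset.mem_filter.2 ⟨hy.1, hy.2, ?_⟩)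
        exact ⟨b, mem_S0_dots hb,
          (fun he => Finset.disjoint_left.1 hInv.disj hb (he.symm ▸ hy.1)),
          conn_single hyS hbS (adjB_symm hadj)⟩
  · refine ⟨b, ?_⟩
    rw [switchStep_eq]
    exact Finset.mem_union_right _ (Finset.mem_filter.2 ⟨hb, hsw⟩)

noncomputable def KS (st : St) (j n : ℕ) : St :=
  (List.range n).foldl (fun s k => switchStep s (j + k + 1)) st

lemma KS_zero (st : St) (j : ℕ) : KS st j 0 = st := rfl

lemma KS_succ (st : St) (j n : ℕ) : KS st j (n + 1) = switchStep (KS st j n) (j + n + 1) := by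
  unfold KS
  rw [List.range_succ, List.foldl_append]
  rfl

lemma KS_add (st : St) (j m n : ℕ) : KS st j (m + n) = KS (KS st j m) (j + m) n := by
  induction n with
  | zero => rfl
  | succ n ih =>
      rw [Nat.add_succ, KS_succ, KS_succ, ih]
      congr 1
      omega

lemma KState_eq (xs dom : Finset Box) (f : Box → ℕ) (m : ℕ) :
    KState xs dom f m = KS (xs, dom, f) 0 m := by
  unfold KState KS
  simp only [Nat.zero_add]

lemma Inv.KS {st : St} (h : Inv st) (j n : ℕ) : Inv (KS st j n) := by
  induction n with
  | zero => exact h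
  | succ n ih => rw [KS_succ]; exact ih.switch _

lemma KS_sub (st : St) (j n : ℕ) :
    (KS st j n).1 ∪ (KS st j n).2.1 ⊆ st.1 ∪ st.2.1 := by
  induction n with
  | zero => exact subset_rfl
  | succ n ih => rw [KS_succ]; exact (switch_sub _ _).trans ih

lemma KS_out {st : St} {b : Box} (hb : b ∉ st.1 ∪ st.2.1) (j n : ℕ) :
    (KS st j n).2.2 b = st.2.2 b := by
  induction n with
  | zero => rfl
  | succ n ih =>
      rw [KS_succ, switch_out (fun hd => hb (KS_sub st j n (Finset.mem_union_left _ hd))), ih]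

lemma KS_bound {st : St} {j n c : ℕ} (h : ∀ b ∈ st.2.1, st.2.2 b ≤ c) (hc : j + n ≤ c) :
    ∀ b ∈ (KS st j n).2.1, (KS st j n).2.2 b ≤ c := by
  induction n with
  | zero => exact h
  | succ n ih =>
      rw [KS_succ]
      exact switch_bound (ih (by omega)) (by omega)

lemma KS_lb {st : St} {j n c : ℕ} (h : ∀ b ∈ st.2.1, c < st.2.2 b) (hc : c ≤ j) :
    ∀ b ∈ (KS st j n).2.1, c < (KS st j n).2.2 b := by
  induction n with
  | zero => exact h
  | succ n ih =>
      rw [KS_succ]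
      exact switch_lb ih (by omega)

lemma KS_id {st : St} {j : ℕ} (hInv : Inv st) (h : ∀ b ∈ st.2.1, st.2.2 b ≤ j) (n : ℕ) :
    KS st j n = st := by
  induction n with
  | zero => rfl
  | succ n ih =>
      rw [KS_succ, ih]
      exact switchStep_id hInv (fun b hb he => by have := h b hb; omega)

lemma KS_id_gt {st : St} {j n : ℕ} (hInv : Inv st) (h : ∀ b ∈ st.2.1, j + n < st.2.2 b) :
    KS st j n = st := by
  induction n with
  | zero => rfl
  | succ n ih =>
      rw [KS_succ, ih (fun b hb => by have := h b hb; omega)]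
      exact switchStep_id hInv (fun b hb he => by have := h b hb; omega)

lemma KS_dots_nonempty {st : St} (hInv : Inv st) (h : st.1.Nonempty) (j n : ℕ) :
    (KS st j n).1.Nonempty := by
  induction n with
  | zero => exact h
  | succ n ih => rw [KS_succ]; exact switch_dots_nonempty (hInv.KS j n) ih _

/-- Equality of slide states up to the values off the numerical domain. -/
def StEq (s t : St) : Prop :=
  s.1 = t.1 ∧ s.2.1 = t.2.1 ∧ ∀ b ∈ s.2.1, s.2.2 b = t.2.2 b

lemma StEq.refl (s : St) : StEq s s := ⟨rfl, rfl, fun _ _ => rfl⟩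

lemma StEq.switch {s t : St} (h : StEq s t) (i : ℕ) :
    StEq (switchStep s i) (switchStep t i) := by
  obtain ⟨h1, h2, h3⟩ := h
  have hS : S0 s i = S0 t i := by
    simp only [S0, h1, h2]
    congr 1
    exact Finset.filter_congr (fun b hb => by rw [h3 b (h2.symm ▸ hb)])
  refine ⟨?_, ?_, ?_⟩
  · simp only [switchStep_eq, hS, h1, h2]
    congr 1
    exact Finset.filter_congr (fun b hb => by rw [h3 b (h2.symm ▸ hb)])
  · simp only [switchStep_eq, hS, h1, h2]
    congr 1
    exact Finset.filter_congr (fun b hb => by rw [h3 b (h2.symm ▸ hb)])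
  · intro b hb
    simp only [switchStep_eq] at hb ⊢
    show ite _ _ _ = ite _ _ _
    rw [h1, hS]
    split_ifs with hc
    · rfl
    · simp only [Finset.mem_union, Finset.mem_filter] at hb
      rcases hb with ⟨hbD, _⟩ | ⟨hbd, hsw⟩
      · exact h3 b hbD
      · exact absurd ⟨h1 ▸ hbd, hS ▸ hsw⟩ hc

lemma StEq.KS {s t : St} (h : StEq s t) (j n : ℕ) : StEq (KS s j n) (KS t j n) := by
  induction n with
  | zero => exact h
  | succ n ih => rw [KS_succ, KS_succ]; exact ih.switch _

end Stmt13
namespace Stmt13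

lemma nonadj_level_of_incr {dom : Finset Box} {f : Box → ℕ} (hf : IncreasingOn dom f)
    (v : ℕ) : Nonadj (dom.filter (fun b => f b = v)) := by
  rintro ⟨x1, x2⟩ hx ⟨y1, y2⟩ hy hadj
  simp only [Finset.mem_filter] at hx hy
  obtain ⟨hx1, hx2⟩ := hx
  obtain ⟨hy1, hy2⟩ := hy
  rcases hadj with ⟨h1, h2 | h2⟩ | ⟨h1, h2 | h2⟩ <;> simp only at h1 h2
  · rw [← h1, ← h2] at hy1 hy2; have := hf.1 x1 x2 hx1 hy1; omega
  · rw [h1, ← h2] at hx1 hx2; have := hf.1 y1 y2 hy1 hx1; omega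
  · rw [← h1, ← h2] at hy1 hy2; have := hf.2 x1 x2 hx1 hy1; omega
  · rw [h1, ← h2] at hx1 hx2; have := hf.2 y1 y2 hy1 hx1; omega

lemma Inv_left {xs P Q : Finset Box} {fL : Box → ℕ} (hInv : Inv (xs, P ∪ Q, fL)) :
    Inv (xs, P, fL) := by
  refine ⟨hInv.disj.mono_right Finset.subset_union_left, hInv.dots, fun i => ?_⟩
  exact (hInv.level i).mono (Finset.filter_subset_filter _ Finset.subset_union_left)

lemma Inv_right {xs P Q : Finset Box} {fL : Box → ℕ} (hInv : Inv (xs, P ∪ Q, fL)) :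
    Inv (xs, Q, fL) := by
  refine ⟨hInv.disj.mono_right Finset.subset_union_right, hInv.dots, fun i => ?_⟩
  exact (hInv.level i).mono (Finset.filter_subset_filter _ Finset.subset_union_right)

lemma KS_stable {st : St} (hInv : Inv st) {m n : ℕ} (hmn : m ≤ n)
    (hm : ∀ b ∈ st.2.1, st.2.2 b ≤ m) : KS st 0 n = KS st 0 m := by
  have h : n = m + (n - m) := by omega
  conv_lhs => rw [h]
  rw [KS_add, Nat.zero_add]
  exact KS_id (hInv.KS 0 m) (KS_bound hm (by omega)) _

lemma KS_skip_low {st : St} (hInv : Inv st) {a n : ℕ} (ha : a ≤ n)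
    (h : ∀ b ∈ st.2.1, a < st.2.2 b) : KS st 0 n = KS st a (n - a) := by
  have heq : n = a + (n - a) := by omega
  conv_lhs => rw [heq]
  rw [KS_add, Nat.zero_add, KS_id_gt hInv (fun b hb => by have := h b hb; omega)]

lemma lift_low {d P Q : Finset Box} {g : Box → ℕ} {a : ℕ}
    (hQ : ∀ b ∈ Q, a < g b) (hdisj : Disjoint (d ∪ P) Q) :
    ∀ m, m ≤ a → KS (d, P ∪ Q, g) 0 m =
      ((KS (d, P, g) 0 m).1, (KS (d, P, g) 0 m).2.1 ∪ Q, (KS (d, P, g) 0 m).2.2) := by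
  intro m hm
  induction m with
  | zero => rfl
  | succ m ih =>
      rw [KS_succ, KS_succ, ih (by omega)]
      have hout : ∀ b ∈ Q, (KS (d, P, g) 0 m).2.2 b = g b := fun b hb =>
        KS_out (Finset.disjoint_right.1 hdisj hb) 0 m
      rw [switchStep_low (a := a) (by omega) (fun b hb => by rw [hout b hb]; exact hQ b hb)]

lemma lift_high {d Q Pa : Finset Box} {g : Box → ℕ} {a : ℕ}
    (hPa : ∀ b ∈ Pa, g b ≤ a) (hdisj : Disjoint (d ∪ Q) Pa) :
    ∀ n, KS (d, Pa ∪ Q, g) a n =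
      ((KS (d, Q, g) a n).1, Pa ∪ (KS (d, Q, g) a n).2.1, (KS (d, Q, g) a n).2.2) := by
  intro n
  induction n with
  | zero => rfl
  | succ n ih =>
      rw [KS_succ, KS_succ, ih]
      have hout : ∀ b ∈ Pa, (KS (d, Q, g) a n).2.2 b = g b := fun b hb =>
        KS_out (Finset.disjoint_right.1 hdisj hb) a n
      rw [switchStep_high (a := a) (by omega) (fun b hb => by rw [hout b hb]; exact hPa b hb)]

end Stmt13
namespace Stmt13

abbrev IST : Type :=
  (Finset Box × (Box → ℕ)) × (Finset Box × (Box → ℕ)) × (Finset Box × (Box → ℕ))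

lemma infusionStep_eq (st : IST) :
    infusionStep st =
      ((st.1.1 \ st.1.1.filter (fun b => st.1.2 b = maxEntry st.1.1 st.1.2), st.1.2),
       ((KState (st.1.1.filter (fun b => st.1.2 b = maxEntry st.1.1 st.1.2)) st.2.1.1 st.2.1.2
          (maxEntry st.2.1.1 st.2.1.2)).2.1,
        (KState (st.1.1.filter (fun b => st.1.2 b = maxEntry st.1.1 st.1.2)) st.2.1.1 st.2.1.2
          (maxEntry st.2.1.1 st.2.1.2)).2.2),
       (st.2.2.1 ∪ (KState (st.1.1.filter (fun b => st.1.2 b = maxEntry st.1.1 st.1.2)) st.2.1.1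
          st.2.1.2 (maxEntry st.2.1.1 st.2.1.2)).1,
        fun b => if b ∈ (KState (st.1.1.filter (fun b => st.1.2 b = maxEntry st.1.1 st.1.2))
            st.2.1.1 st.2.1.2 (maxEntry st.2.1.1 st.2.1.2)).1 then maxEntry st.1.1 st.1.2
          else st.2.2.2 b)) := rfl

/-- The evolution of the inner tableau during K-infusion. -/
noncomputable def innerStep (R : Finset Box × (Box → ℕ)) : Finset Box × (Box → ℕ) :=
  (R.1 \ R.1.filter (fun b => R.2 b = maxEntry R.1 R.2), R.2)

lemma iterate_fst (R U H : Finset Box × (Box → ℕ)) (k : ℕ) :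
    (infusionStep^[k] (R, U, H)).1 = innerStep^[k] R := by
  induction k with
  | zero => rfl
  | succ k ih =>
      rw [Function.iterate_succ_apply', Function.iterate_succ_apply', ← ih]
      rfl

lemma innerStep_iter {R : Finset Box × (Box → ℕ)} {M : ℕ}
    (hmax : maxEntry R.1 R.2 = M)
    (hsurj : ∀ v, 1 ≤ v → v ≤ M → ∃ b ∈ R.1, R.2 b = v)
    (hpos : ∀ b ∈ R.1, 1 ≤ R.2 b) :
    ∀ k, k ≤ M → innerStep^[k] R = (R.1.filter (fun b => R.2 b ≤ M - k), R.2) := by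
  intro k hk
  induction k with
  | zero =>
      simp only [Function.iterate_zero, id_eq, Nat.sub_zero]
      refine Prod.ext ?_ rfl
      exact (Finset.filter_true_of_mem (fun b hb => hmax ▸ Finset.le_sup hb)).symm
  | succ k ih =>
      rw [Function.iterate_succ_apply', ih (by omega)]
      have hme : maxEntry (R.1.filter (fun b => R.2 b ≤ M - k)) R.2 = M - k := by
        apply le_antisymm
        · exact Finset.sup_le (fun b hb => (Finset.mem_filter.1 hb).2)
        · obtain ⟨b, hb, hbv⟩ := hsurj (M - k) (by omega) (by omega)
          calc M - k = R.2 b := hbv.symm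
          _ ≤ _ := Finset.le_sup (Finset.mem_filter.2 ⟨hb, hbv.le⟩)
      simp only [innerStep, hme]
      refine Prod.ext ?_ rfl
      ext b
      simp only [Finset.mem_sdiff, Finset.mem_filter]
      constructor
      · rintro ⟨⟨hb, hle⟩, hne⟩
        have : ¬ (R.2 b = M - k) := fun he => hne ⟨⟨hb, hle⟩, he⟩
        exact ⟨hb, by omega⟩
      · rintro ⟨hb, hle⟩
        have h1 := hpos b hb
        exact ⟨⟨hb, by omega⟩, fun hc => absurd hc.2 (by omega)⟩

/-- The maximal-label boxes of the current inner tableau, at step `k`. -/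
lemma inner_filter_max {lam : Finset Box} {Rf : Box → ℕ} {M k : ℕ} :
    (lam.filter (fun b => Rf b ≤ M - k)).filter (fun b => Rf b = M - k)
      = lam.filter (fun b => Rf b = M - k) := by
  ext b
  simp only [Finset.mem_filter]
  constructor
  · rintro ⟨⟨hb, _⟩, he⟩; exact ⟨hb, he⟩
  · rintro ⟨hb, he⟩; exact ⟨⟨hb, le_of_eq he⟩, he⟩

end Stmt13
namespace Stmt13

noncomputable def SAs (lam : Finset Box) (Rf : Box → ℕ) (A : Finset Box) (f : Box → ℕ)
    (k : ℕ) : IST :=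
  infusionStep^[k] ((lam, Rf), (A, f), (∅, fun _ => 0))

lemma SAs_succ (lam : Finset Box) (Rf : Box → ℕ) (A : Finset Box) (f : Box → ℕ) (k : ℕ) :
    SAs lam Rf A f (k + 1) = infusionStep (SAs lam Rf A f k) :=
  Function.iterate_succ_apply' _ _ _

/-- The set of holes (final dots) created at step `k+1` of the infusion. -/
noncomputable def eSet (lam : Finset Box) (Rf : Box → ℕ) (A : Finset Box) (f : Box → ℕ)
    (k : ℕ) : Finset Box :=
  (KState ((SAs lam Rf A f k).1.1.filter
      (fun b => (SAs lam Rf A f k).1.2 b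
        = maxEntry (SAs lam Rf A f k).1.1 (SAs lam Rf A f k).1.2))
    (SAs lam Rf A f k).2.1.1 (SAs lam Rf A f k).2.1.2
    (maxEntry (SAs lam Rf A f k).2.1.1 (SAs lam Rf A f k).2.1.2)).1

lemma SAs_inner {lam : Finset Box} {Rf : Box → ℕ} {M : ℕ} (A : Finset Box) (f : Box → ℕ)
    (hmax : maxEntry lam Rf = M)
    (hsurj : ∀ v, 1 ≤ v → v ≤ M → ∃ b ∈ lam, Rf b = v)
    (hpos : ∀ b ∈ lam, 1 ≤ Rf b) {k : ℕ} (hk : k ≤ M) :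
    (SAs lam Rf A f k).1 = (lam.filter (fun b => Rf b ≤ M - k), Rf) := by
  unfold SAs
  rw [iterate_fst]
  exact innerStep_iter (R := (lam, Rf)) hmax hsurj hpos k hk

lemma maxEntry_inner {lam : Finset Box} {Rf : Box → ℕ} {M : ℕ}
    (hsurj : ∀ v, 1 ≤ v → v ≤ M → ∃ b ∈ lam, Rf b = v) {k : ℕ} (hk : k < M) :
    maxEntry (lam.filter (fun b => Rf b ≤ M - k)) Rf = M - k := by
  apply le_antisymm
  · exact Finset.sup_le (fun b hb => (Finset.mem_filter.1 hb).2)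
  · obtain ⟨b, hb, hbv⟩ := hsurj (M - k) (by omega) (by omega)
    calc M - k = Rf b := hbv.symm
    _ ≤ _ := Finset.le_sup (Finset.mem_filter.2 ⟨hb, hbv.le⟩)

structure SAfacts (lam : Finset Box) (Rf : Box → ℕ) (A : Finset Box) (f : Box → ℕ)
    (M k : ℕ) : Prop where
  lev : ∀ i, Nonadj ((SAs lam Rf A f k).2.1.1.filter
          (fun b => (SAs lam Rf A f k).2.1.2 b = i))
  usub : (SAs lam Rf A f k).2.1.1 ⊆ A ∪ lam.filter (fun b => M - k < Rf b)
  holes : (SAs lam Rf A f k).2.2.1 = (Finset.range k).biUnion (eSet lam Rf A f)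
  hlab : ∀ j < k, ∀ b ∈ eSet lam Rf A f j, (SAs lam Rf A f k).2.2.2 b = M - j
  hdisj : Disjoint (SAs lam Rf A f k).2.2.1
      ((SAs lam Rf A f k).2.1.1 ∪ lam.filter (fun b => Rf b ≤ M - k))
  ene : ∀ j < k, (eSet lam Rf A f j).Nonempty
  ena : ∀ j < k, Nonadj (eSet lam Rf A f j)
  esub : ∀ j < k, eSet lam Rf A f j ⊆ lam ∪ A

lemma SAfacts_all {lam A : Finset Box} {Rf f : Box → ℕ} {M : ℕ}
    (hmax : maxEntry lam Rf = M)
    (hsurj : ∀ v, 1 ≤ v → v ≤ M → ∃ b ∈ lam, Rf b = v)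
    (hpos : ∀ b ∈ lam, 1 ≤ Rf b)
    (hRlev : ∀ i, Nonadj (lam.filter (fun b => Rf b = i)))
    (hAlev : ∀ i, Nonadj (A.filter (fun b => f b = i)))
    (hAdisj : Disjoint A lam) :
    ∀ k, k ≤ M → SAfacts lam Rf A f M k := by
  intro k
  induction k with
  | zero =>
      intro _
      refine ⟨hAlev, Finset.subset_union_left, by simp [SAs], ?_, ?_, ?_, ?_, ?_⟩ <;>
        first
          | (intro j hj; omega)
          | (show Disjoint (∅ : Finset Box) _; simp)
  | succ k ih =>
      intro hk1
      have hk : k < M := hk1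
      obtain ⟨lev, usub, holes, hlab, hdisj, ene, ena, esub⟩ := ih (le_of_lt hk)
      have hin := SAs_inner A f hmax hsurj hpos (le_of_lt hk)
      have h11 : (SAs lam Rf A f k).1.1 = lam.filter (fun b => Rf b ≤ M - k) := by rw [hin]
      have h12 : (SAs lam Rf A f k).1.2 = Rf := by rw [hin]
      have hme : maxEntry (SAs lam Rf A f k).1.1 (SAs lam Rf A f k).1.2 = M - k := by
        rw [h11, h12]; exact maxEntry_inner hsurj hk
      have hxs : (SAs lam Rf A f k).1.1.filter
          (fun b => (SAs lam Rf A f k).1.2 b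
            = maxEntry (SAs lam Rf A f k).1.1 (SAs lam Rf A f k).1.2)
          = lam.filter (fun b => Rf b = M - k) := by
        simp only [h11, h12]
        rw [maxEntry_inner hsurj hk]
        exact inner_filter_max
      have heq0 : eSet lam Rf A f k
          = (KState (lam.filter (fun b => Rf b = M - k)) (SAs lam Rf A f k).2.1.1
              (SAs lam Rf A f k).2.1.2
              (maxEntry (SAs lam Rf A f k).2.1.1 (SAs lam Rf A f k).2.1.2)).1 := by
        unfold eSet
        rw [hxs]
      have hIS := infusionStep_eq (SAs lam Rf A f k)
      rw [hxs, hme] at hIS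
      set Dk := (SAs lam Rf A f k).2.1.1 with hDkdef
      set fk := (SAs lam Rf A f k).2.1.2 with hfkdef
      set xs := lam.filter (fun b => Rf b = M - k) with hxsdef
      set mA := maxEntry Dk fk with hmAdef
      rw [KState_eq] at heq0
      set ks := KS (xs, Dk, fk) 0 mA with hksdef
      rw [KState_eq] at hIS
      have hsucc : SAs lam Rf A f (k + 1) = infusionStep (SAs lam Rf A f k) :=
        SAs_succ lam Rf A f k
      rw [hIS] at hsucc
      have hU1 : (SAs lam Rf A f (k + 1)).2.1.1 = ks.2.1 := by rw [hsucc]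
      have hU2 : (SAs lam Rf A f (k + 1)).2.1.2 = ks.2.2 := by rw [hsucc]
      have hH1 : (SAs lam Rf A f (k + 1)).2.2.1 = (SAs lam Rf A f k).2.2.1 ∪ ks.1 := by
        rw [hsucc]
      have hH2 : (SAs lam Rf A f (k + 1)).2.2.2
          = fun b => if b ∈ ks.1 then M - k else (SAs lam Rf A f k).2.2.2 b := by
        rw [hsucc]
      -- invariants for this slide
      have hInv0 : Inv (xs, Dk, fk) := by
        refine ⟨?_, ?_, lev⟩
        · rw [Finset.disjoint_left]
          intro b hb hbD
          have hbu := usub hbD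
          rw [hxsdef] at hb
          simp only [Finset.mem_union, Finset.mem_filter] at hb hbu
          rcases hbu with hbA | ⟨_, hgt⟩
          · exact Finset.disjoint_left.1 hAdisj hbA hb.1
          · omega
        · rw [hxsdef]; exact hRlev (M - k)
      have hInvF : Inv ks := hInv0.KS 0 mA
      have hsubk : ks.1 ∪ ks.2.1 ⊆ xs ∪ Dk := KS_sub (xs, Dk, fk) 0 mA
      -- the fields
      refine ⟨?_, ?_, ?_, ?_, ?_, ?_, ?_, ?_⟩
      · intro i
        simp only [hU1, hU2]
        exact hInvF.level i
      · rw [hU1]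
        intro b hb
        have hbu := hsubk (Finset.mem_union_right _ hb)
        simp only [Finset.mem_union, Finset.mem_filter, hxsdef] at hbu ⊢
        rcases hbu with ⟨hbl, hbe⟩ | hbD
        · right; exact ⟨hbl, by omega⟩
        · have := usub hbD
          simp only [Finset.mem_union, Finset.mem_filter] at this
          rcases this with hbA | ⟨hbl, hgt⟩
          · left; exact hbA
          · right; exact ⟨hbl, by omega⟩
      · rw [hH1, holes, ← heq0, Finset.range_add_one, Finset.biUnion_insert, Finset.union_comm]
      · intro j hj b hb
        rw [hH2]
        rcases Nat.lt_succ_iff_lt_or_eq.1 hj with hj' | rfl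
        · have hbh : b ∈ (SAs lam Rf A f k).2.2.1 := by
            rw [holes]; exact Finset.mem_biUnion.2 ⟨j, Finset.mem_range.2 hj', hb⟩
          have hnot : b ∉ ks.1 := by
            intro hbk
            apply Finset.disjoint_left.1 hdisj hbh
            have hbu := hsubk (Finset.mem_union_left _ hbk)
            simp only [Finset.mem_union, Finset.mem_filter, hxsdef] at hbu ⊢
            rcases hbu with ⟨hbl, hbe⟩ | hD
            · right; exact ⟨hbl, hbe.le⟩
            · left; exact hD
          simp only [if_neg hnot]
          exact hlab j hj' b hb
        · rw [heq0] at hb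
          simp only [if_pos hb]
      · rw [hH1, hU1, Finset.disjoint_left]
        intro b hb hbr
        simp only [Finset.mem_union] at hb hbr
        rcases hb with hbh | hbk
        · apply Finset.disjoint_left.1 hdisj hbh
          rcases hbr with hbU | hbl
          · have hbu := hsubk (Finset.mem_union_right _ hbU)
            simp only [Finset.mem_union, Finset.mem_filter, hxsdef] at hbu ⊢
            rcases hbu with ⟨hbl, hbe⟩ | hD
            · right; exact ⟨hbl, hbe.le⟩
            · left; exact hD
          · simp only [Finset.mem_union, Finset.mem_filter] at hbl ⊢
            right; exact ⟨hbl.1, by omega⟩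
        · rcases hbr with hbU | hbl
          · exact Finset.disjoint_left.1 hInvF.disj hbk hbU
          · have hbu := hsubk (Finset.mem_union_left _ hbk)
            simp only [Finset.mem_union, Finset.mem_filter, hxsdef] at hbu hbl
            rcases hbu with ⟨_, he⟩ | hD
            · omega
            · have := usub hD
              simp only [Finset.mem_union, Finset.mem_filter] at this
              rcases this with hbA | ⟨_, hgt⟩
              · exact Finset.disjoint_left.1 hAdisj hbA hbl.1
              · omega
      · intro j hj
        rcases Nat.lt_succ_iff_lt_or_eq.1 hj with hj' | rfl
        · exact ene j hj'
        · rw [heq0]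
          apply KS_dots_nonempty hInv0 _ 0 mA
          obtain ⟨b, hb, hbe⟩ := hsurj (M - j) (by omega) (by omega)
          exact ⟨b, by rw [hxsdef]; exact Finset.mem_filter.2 ⟨hb, hbe⟩⟩
      · intro j hj
        rcases Nat.lt_succ_iff_lt_or_eq.1 hj with hj' | rfl
        · exact ena j hj'
        · rw [heq0]; exact hInvF.dots
      · intro j hj
        rcases Nat.lt_succ_iff_lt_or_eq.1 hj with hj' | rfl
        · exact esub j hj'
        · rw [heq0]
          intro b hb
          have hbu := hsubk (Finset.mem_union_left _ hb)
          simp only [Finset.mem_union, Finset.mem_filter, hxsdef] at hbu ⊢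
          rcases hbu with ⟨hbl, _⟩ | hD
          · left; exact hbl
          · have := usub hD
            simp only [Finset.mem_union, Finset.mem_filter] at this
            rcases this with hbA | ⟨hbl, _⟩
            · right; exact hbA
            · left; exact hbl

end Stmt13
namespace Stmt13

lemma SAs_Ustep {lam A : Finset Box} {Rf f : Box → ℕ} {M : ℕ}
    (hmax : maxEntry lam Rf = M)
    (hsurj : ∀ v, 1 ≤ v → v ≤ M → ∃ b ∈ lam, Rf b = v)
    (hpos : ∀ b ∈ lam, 1 ≤ Rf b) {k : ℕ} (hk : k < M) :
    (SAs lam Rf A f (k + 1)).2.1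
      = ((KS (lam.filter (fun b => Rf b = M - k), (SAs lam Rf A f k).2.1.1,
            (SAs lam Rf A f k).2.1.2) 0
          (maxEntry (SAs lam Rf A f k).2.1.1 (SAs lam Rf A f k).2.1.2)).2.1,
         (KS (lam.filter (fun b => Rf b = M - k), (SAs lam Rf A f k).2.1.1,
            (SAs lam Rf A f k).2.1.2) 0
          (maxEntry (SAs lam Rf A f k).2.1.1 (SAs lam Rf A f k).2.1.2)).2.2) := by
  have hin := SAs_inner A f hmax hsurj hpos (le_of_lt hk)
  have h11 : (SAs lam Rf A f k).1.1 = lam.filter (fun b => Rf b ≤ M - k) := by rw [hin]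
  have h12 : (SAs lam Rf A f k).1.2 = Rf := by rw [hin]
  have hxs : (SAs lam Rf A f k).1.1.filter
      (fun b => (SAs lam Rf A f k).1.2 b
        = maxEntry (SAs lam Rf A f k).1.1 (SAs lam Rf A f k).1.2)
      = lam.filter (fun b => Rf b = M - k) := by
    simp only [h11, h12]
    rw [maxEntry_inner hsurj hk]
    exact inner_filter_max
  have hIS := infusionStep_eq (SAs lam Rf A f k)
  rw [hxs, KState_eq] at hIS
  rw [SAs_succ, hIS]

lemma eSet_eq {lam A : Finset Box} {Rf f : Box → ℕ} {M : ℕ}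
    (hmax : maxEntry lam Rf = M)
    (hsurj : ∀ v, 1 ≤ v → v ≤ M → ∃ b ∈ lam, Rf b = v)
    (hpos : ∀ b ∈ lam, 1 ≤ Rf b) {k : ℕ} (hk : k < M) :
    eSet lam Rf A f k
      = (KS (lam.filter (fun b => Rf b = M - k), (SAs lam Rf A f k).2.1.1,
            (SAs lam Rf A f k).2.1.2) 0
          (maxEntry (SAs lam Rf A f k).2.1.1 (SAs lam Rf A f k).2.1.2)).1 := by
  have hin := SAs_inner A f hmax hsurj hpos (le_of_lt hk)
  have h11 : (SAs lam Rf A f k).1.1 = lam.filter (fun b => Rf b ≤ M - k) := by rw [hin]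
  have h12 : (SAs lam Rf A f k).1.2 = Rf := by rw [hin]
  have hxs : (SAs lam Rf A f k).1.1.filter
      (fun b => (SAs lam Rf A f k).1.2 b
        = maxEntry (SAs lam Rf A f k).1.1 (SAs lam Rf A f k).1.2)
      = lam.filter (fun b => Rf b = M - k) := by
    simp only [h11, h12]
    rw [maxEntry_inner hsurj hk]
    exact inner_filter_max
  unfold eSet
  rw [hxs, KState_eq]

section HFacts

variable {lam A : Finset Box} {Rf f : Box → ℕ} {M : ℕ}

lemma H_filter (SF : SAfacts lam Rf A f M M) {j : ℕ} (hj : j < M) :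
    (SAs lam Rf A f M).2.2.1.filter (fun b => (SAs lam Rf A f M).2.2.2 b = M - j)
      = eSet lam Rf A f j := by
  ext b
  simp only [Finset.mem_filter, SF.holes, Finset.mem_biUnion, Finset.mem_range]
  constructor
  · rintro ⟨⟨j', hj', hb⟩, hv⟩
    have hv' := SF.hlab j' hj' b hb
    have : j' = j := by omega
    subst this; exact hb
  · intro hb
    exact ⟨⟨j, hj, hb⟩, SF.hlab j hj b hb⟩

lemma H_max (SF : SAfacts lam Rf A f M M) :
    maxEntry (SAs lam Rf A f M).2.2.1 (SAs lam Rf A f M).2.2.2 = M := by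
  rcases Nat.eq_zero_or_pos M with rfl | hM
  · rw [maxEntry, SF.holes]
    simp
  · apply le_antisymm
    · apply Finset.sup_le
      intro b hb
      rw [SF.holes] at hb
      obtain ⟨j, hj, hbe⟩ := Finset.mem_biUnion.1 hb
      rw [SF.hlab j (Finset.mem_range.1 hj) b hbe]
      omega
    · obtain ⟨b, hb⟩ := SF.ene 0 hM
      have hbH : b ∈ (SAs lam Rf A f M).2.2.1 := by
        rw [SF.holes]
        exact Finset.mem_biUnion.2 ⟨0, Finset.mem_range.2 hM, hb⟩
      calc M = (SAs lam Rf A f M).2.2.2 b := by rw [SF.hlab 0 hM b hb]; omega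
      _ ≤ _ := Finset.le_sup hbH

lemma H_pos (SF : SAfacts lam Rf A f M M) :
    ∀ b ∈ (SAs lam Rf A f M).2.2.1, 1 ≤ (SAs lam Rf A f M).2.2.2 b := by
  intro b hb
  rw [SF.holes] at hb
  obtain ⟨j, hj, hbe⟩ := Finset.mem_biUnion.1 hb
  have hj' := Finset.mem_range.1 hj
  rw [SF.hlab j hj' b hbe]
  omega

lemma H_surj (SF : SAfacts lam Rf A f M M) :
    ∀ v, 1 ≤ v → v ≤ M → ∃ b ∈ (SAs lam Rf A f M).2.2.1, (SAs lam Rf A f M).2.2.2 b = v := by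
  intro v hv1 hv2
  obtain ⟨b, hb⟩ := SF.ene (M - v) (by omega)
  have hbH : b ∈ (SAs lam Rf A f M).2.2.1 := by
    rw [SF.holes]
    exact Finset.mem_biUnion.2 ⟨M - v, Finset.mem_range.2 (by omega), hb⟩
  refine ⟨b, hbH, ?_⟩
  rw [SF.hlab (M - v) (by omega) b hb]
  omega

lemma H_lev (SF : SAfacts lam Rf A f M M) :
    ∀ i, Nonadj ((SAs lam Rf A f M).2.2.1.filter (fun b => (SAs lam Rf A f M).2.2.2 b = i)) := by
  intro i x hx y hy hadj
  simp only [Finset.mem_filter] at hx hy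
  obtain ⟨hx1, hx2⟩ := hx
  obtain ⟨hy1, hy2⟩ := hy
  rw [SF.holes] at hx1 hy1
  obtain ⟨j, hj, hxe⟩ := Finset.mem_biUnion.1 hx1
  obtain ⟨j', hj', hye⟩ := Finset.mem_biUnion.1 hy1
  have hjr := Finset.mem_range.1 hj
  have hjr' := Finset.mem_range.1 hj'
  have hvx := SF.hlab j hjr x hxe
  have hvy := SF.hlab j' hjr' y hye
  have : j' = j := by omega
  subst this
  exact SF.ena j' hjr' x hxe y hye hadj

lemma H_sub (SF : SAfacts lam Rf A f M M) :
    (SAs lam Rf A f M).2.2.1 ⊆ lam ∪ A := by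
  intro b hb
  rw [SF.holes] at hb
  obtain ⟨j, hj, hbe⟩ := Finset.mem_biUnion.1 hb
  exact SF.esub j (Finset.mem_range.1 hj) hbe

end HFacts

end Stmt13
namespace Stmt13

lemma GI_step {xs PA QB : Finset Box} {fL fA fB : Box → ℕ} {a : ℕ}
    (hULlev : ∀ i, Nonadj ((PA ∪ QB).filter (fun b => fL b = i)))
    (hxsdisj : Disjoint xs (PA ∪ QB))
    (hxsna : Nonadj xs)
    (g2 : ∀ b ∈ PA, fL b = fA b)
    (g3 : ∀ b ∈ QB, fL b = fB b)
    (g4 : ∀ b ∈ QB, a < fB b)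
    (g7 : Disjoint PA QB)
    (g8 : ∀ b ∈ PA, fA b ≤ a) :
    (KS (xs, PA ∪ QB, fL) 0 (maxEntry (PA ∪ QB) fL)).2.1
        = (KS (xs, PA, fA) 0 (maxEntry PA fA)).2.1
          ∪ (KS ((KS (xs, PA, fA) 0 (maxEntry PA fA)).1, QB, fB) 0 (maxEntry QB fB)).2.1
    ∧ (∀ b ∈ (KS (xs, PA, fA) 0 (maxEntry PA fA)).2.1,
        (KS (xs, PA ∪ QB, fL) 0 (maxEntry (PA ∪ QB) fL)).2.2 b
          = (KS (xs, PA, fA) 0 (maxEntry PA fA)).2.2 b)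
    ∧ (∀ b ∈ (KS ((KS (xs, PA, fA) 0 (maxEntry PA fA)).1, QB, fB) 0 (maxEntry QB fB)).2.1,
        (KS (xs, PA ∪ QB, fL) 0 (maxEntry (PA ∪ QB) fL)).2.2 b
          = (KS ((KS (xs, PA, fA) 0 (maxEntry PA fA)).1, QB, fB) 0 (maxEntry QB fB)).2.2 b)
    ∧ (∀ b ∈ (KS ((KS (xs, PA, fA) 0 (maxEntry PA fA)).1, QB, fB) 0 (maxEntry QB fB)).2.1,
        a < (KS ((KS (xs, PA, fA) 0 (maxEntry PA fA)).1, QB, fB) 0 (maxEntry QB fB)).2.2 b)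
    ∧ Disjoint (KS (xs, PA, fA) 0 (maxEntry PA fA)).2.1
        (KS ((KS (xs, PA, fA) 0 (maxEntry PA fA)).1, QB, fB) 0 (maxEntry QB fB)).2.1
    ∧ (∀ b ∈ (KS (xs, PA, fA) 0 (maxEntry PA fA)).2.1,
        (KS (xs, PA, fA) 0 (maxEntry PA fA)).2.2 b ≤ a) := by
  have hmA : maxEntry PA fA ≤ a := Finset.sup_le g8
  have hInv0L : Inv (xs, PA ∪ QB, fL) := ⟨hxsdisj, hxsna, hULlev⟩
  have hInvPL : Inv (xs, PA, fL) := Inv_left hInv0L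
  have hInvPA : Inv (xs, PA, fA) := by
    refine ⟨hInvPL.disj, hxsna, fun i => ?_⟩
    have he : PA.filter (fun b => fA b = i) = PA.filter (fun b => fL b = i) :=
      Finset.filter_congr (fun b hb => by rw [g2 b hb])
    rw [he]
    exact hInvPL.level i
  have hfLP : ∀ b ∈ PA, fL b ≤ a := fun b hb => by rw [g2 b hb]; exact g8 b hb
  have hfLQ : ∀ b ∈ QB, a < fL b := fun b hb => by rw [g3 b hb]; exact g4 b hb
  have hSEP : ∀ n, StEq (KS (xs, PA, fL) 0 n) (KS (xs, PA, fA) 0 n) := fun n =>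
    StEq.KS (s := (xs, PA, fL)) (t := (xs, PA, fA)) ⟨rfl, rfl, g2⟩ 0 n
  have hstabA : KS (xs, PA, fA) 0 a = KS (xs, PA, fA) 0 (maxEntry PA fA) :=
    KS_stable hInvPA hmA (fun b hb => Finset.le_sup hb)
  have hSE := hSEP a
  rw [hstabA] at hSE
  have hg8' : ∀ b ∈ (KS (xs, PA, fA) 0 (maxEntry PA fA)).2.1,
      (KS (xs, PA, fA) 0 (maxEntry PA fA)).2.2 b ≤ a := KS_bound g8 (by omega)
  have hdisjxsPA_Q : Disjoint (xs ∪ PA) QB := by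
    rw [Finset.disjoint_union_left]
    exact ⟨hxsdisj.mono_right Finset.subset_union_right, g7⟩
  have hsubCP := KS_sub (xs, PA, fL) 0 a
  have hInvCP : Inv (KS (xs, PA, fL) 0 a) := hInvPL.KS 0 a
  have hCPbound : ∀ b ∈ (KS (xs, PA, fL) 0 a).2.1, (KS (xs, PA, fL) 0 a).2.2 b ≤ a :=
    KS_bound hfLP (by omega)
  have hCPoutQ : ∀ b ∈ QB, (KS (xs, PA, fL) 0 a).2.2 b = fL b :=
    fun b hb => KS_out (Finset.disjoint_right.1 hdisjxsPA_Q hb) 0 a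
  have hlow : KS (xs, PA ∪ QB, fL) 0 a
      = ((KS (xs, PA, fL) 0 a).1, (KS (xs, PA, fL) 0 a).2.1 ∪ QB,
         (KS (xs, PA, fL) 0 a).2.2) := lift_low hfLQ hdisjxsPA_Q a le_rfl
  rcases QB.eq_empty_or_nonempty with hQe | hQne
  · -- Q empty
    subst hQe
    have hmB : maxEntry (∅ : Finset Box) fB = 0 := rfl
    have hmPA : maxEntry PA fL = maxEntry PA fA := Finset.sup_congr rfl g2
    have hSE2 := hSEP (maxEntry PA fA)
    refine ⟨?_, ?_, ?_, ?_, ?_, hg8'⟩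
    · simp only [Finset.union_empty, hmPA, hmB, KS_zero]
      rw [hSE2.2.1]
    · intro b hb
      simp only [Finset.union_empty, hmPA]
      exact hSE2.2.2 b (hSE2.2.1.symm ▸ hb)
    · intro b hb
      simp only [hmB, KS_zero] at hb
      exact absurd hb (Finset.notMem_empty b)
    · intro b hb
      simp only [hmB, KS_zero] at hb
      exact absurd hb (Finset.notMem_empty b)
    · simp only [hmB, KS_zero]
      exact Finset.disjoint_empty_right _
  · -- Q nonempty
    obtain ⟨q, hq⟩ := hQne
    have hmBgt : a < maxEntry QB fB := lt_of_lt_of_le (g4 q hq) (Finset.le_sup hq)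
    have hmU : maxEntry (PA ∪ QB) fL = maxEntry QB fB := by
      unfold maxEntry
      rw [Finset.sup_union, Finset.sup_congr rfl g2, Finset.sup_congr rfl g3]
      exact max_eq_right (le_trans hmA (le_of_lt hmBgt))
    have hdj : Disjoint ((KS (xs, PA, fL) 0 a).1 ∪ QB) (KS (xs, PA, fL) 0 a).2.1 := by
      rw [Finset.disjoint_union_left]
      refine ⟨hInvCP.disj, Finset.disjoint_left.2 fun b hbQ hbC => ?_⟩
      exact (Finset.disjoint_right.1 hdisjxsPA_Q hbQ) (hsubCP (Finset.mem_union_right _ hbC))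
    have hfull : KS (xs, PA ∪ QB, fL) 0 (maxEntry (PA ∪ QB) fL)
        = ((KS ((KS (xs, PA, fL) 0 a).1, QB, (KS (xs, PA, fL) 0 a).2.2) a
              (maxEntry QB fB - a)).1,
           (KS (xs, PA, fL) 0 a).2.1
             ∪ (KS ((KS (xs, PA, fL) 0 a).1, QB, (KS (xs, PA, fL) 0 a).2.2) a
                 (maxEntry QB fB - a)).2.1,
           (KS ((KS (xs, PA, fL) 0 a).1, QB, (KS (xs, PA, fL) 0 a).2.2) a
             (maxEntry QB fB - a)).2.2) := by
      rw [hmU]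
      have hsplit : maxEntry QB fB = a + (maxEntry QB fB - a) := by omega
      conv_lhs => rw [hsplit]
      rw [KS_add, Nat.zero_add, hlow]
      exact lift_high hCPbound hdj _
    have hInvB : Inv ((KS (xs, PA, fL) 0 a).1, QB, fB) := by
      refine ⟨Finset.disjoint_left.2 fun b hbC hbQ =>
          (Finset.disjoint_right.1 hdisjxsPA_Q hbQ) (hsubCP (Finset.mem_union_left _ hbC)),
        hInvCP.dots, fun i => ?_⟩
      have he : QB.filter (fun b => fB b = i) = QB.filter (fun b => fL b = i) :=
        Finset.filter_congr (fun b hb => by rw [g3 b hb])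
      rw [he]
      exact (hInv0L.level i).mono
        (Finset.filter_subset_filter _ Finset.subset_union_right)
    have hskip : KS ((KS (xs, PA, fL) 0 a).1, QB, fB) 0 (maxEntry QB fB)
        = KS ((KS (xs, PA, fL) 0 a).1, QB, fB) a (maxEntry QB fB - a) :=
      KS_skip_low hInvB (le_of_lt hmBgt) g4
    have hSEB : StEq ((KS (xs, PA, fL) 0 a).1, QB, fB)
        ((KS (xs, PA, fL) 0 a).1, QB, (KS (xs, PA, fL) 0 a).2.2) :=
      ⟨rfl, rfl, fun b hb => by rw [hCPoutQ b hb]; exact (g3 b hb).symm⟩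
    have hSEB2 := hSEB.KS a (maxEntry QB fB - a)
    have hKB : KS ((KS (xs, PA, fA) 0 (maxEntry PA fA)).1, QB, fB) 0 (maxEntry QB fB)
        = KS ((KS (xs, PA, fL) 0 a).1, QB, fB) a (maxEntry QB fB - a) := by
      rw [← hSE.1]
      exact hskip
    have hKL1 : (KS (xs, PA ∪ QB, fL) 0 (maxEntry (PA ∪ QB) fL)).2.1
        = (KS (xs, PA, fL) 0 a).2.1
          ∪ (KS ((KS (xs, PA, fL) 0 a).1, QB, (KS (xs, PA, fL) 0 a).2.2) a
              (maxEntry QB fB - a)).2.1 := by rw [hfull]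
    have hKL2 : (KS (xs, PA ∪ QB, fL) 0 (maxEntry (PA ∪ QB) fL)).2.2
        = (KS ((KS (xs, PA, fL) 0 a).1, QB, (KS (xs, PA, fL) 0 a).2.2) a
            (maxEntry QB fB - a)).2.2 := by rw [hfull]
    have hHQsub := KS_sub ((KS (xs, PA, fL) 0 a).1, QB, (KS (xs, PA, fL) 0 a).2.2) a
      (maxEntry QB fB - a)
    have hHQout : ∀ b ∈ (KS (xs, PA, fL) 0 a).2.1,
        (KS ((KS (xs, PA, fL) 0 a).1, QB, (KS (xs, PA, fL) 0 a).2.2) a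
          (maxEntry QB fB - a)).2.2 b = (KS (xs, PA, fL) 0 a).2.2 b :=
      fun b hb => KS_out (Finset.disjoint_right.1 hdj hb) a (maxEntry QB fB - a)
    refine ⟨?_, ?_, ?_, ?_, ?_, hg8'⟩
    · rw [hKL1, hKB, ← hSE.2.1, ← hSEB2.2.1]
    · intro b hb
      rw [hKL2]
      have hbC : b ∈ (KS (xs, PA, fL) 0 a).2.1 := hSE.2.1.symm ▸ hb
      rw [hHQout b hbC]
      exact hSE.2.2 b hbC
    · intro b hb
      rw [hKB] at hb
      rw [hKL2, hKB]
      exact (hSEB2.2.2 b hb).symm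
    · intro b hb
      rw [hKB] at hb ⊢
      exact KS_lb g4 le_rfl b hb
    · rw [← hSE.2.1, hKB, hSEB2.2.1]
      exact Finset.disjoint_left.2 fun b hbC hbH =>
        Finset.disjoint_left.1 hdj (hHQsub (Finset.mem_union_right _ hbH)) hbC

end Stmt13
namespace Stmt13

lemma GI_all {lam A B : Finset Box} {Rf f : Box → ℕ} {M a : ℕ}
    (hmax : maxEntry lam Rf = M)
    (hsurj : ∀ v, 1 ≤ v → v ≤ M → ∃ b ∈ lam, Rf b = v)
    (hpos : ∀ b ∈ lam, 1 ≤ Rf b)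
    (hRlev : ∀ i, Nonadj (lam.filter (fun b => Rf b = i)))
    (hABlev : ∀ i, Nonadj ((A ∪ B).filter (fun b => f b = i)))
    (hAval : ∀ b ∈ A, f b ≤ a)
    (hBval : ∀ b ∈ B, a < f b)
    (hABdisj : Disjoint (A ∪ B) lam) :
    ∀ k, k ≤ M →
      (SAs lam Rf (A ∪ B) f k).2.1.1
        = (SAs lam Rf A f k).2.1.1
          ∪ (SAs (SAs lam Rf A f M).2.2.1 (SAs lam Rf A f M).2.2.2 B f k).2.1.1
      ∧ (∀ b ∈ (SAs lam Rf A f k).2.1.1,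
          (SAs lam Rf (A ∪ B) f k).2.1.2 b = (SAs lam Rf A f k).2.1.2 b)
      ∧ (∀ b ∈ (SAs (SAs lam Rf A f M).2.2.1 (SAs lam Rf A f M).2.2.2 B f k).2.1.1,
          (SAs lam Rf (A ∪ B) f k).2.1.2 b
            = (SAs (SAs lam Rf A f M).2.2.1 (SAs lam Rf A f M).2.2.2 B f k).2.1.2 b)
      ∧ (∀ b ∈ (SAs (SAs lam Rf A f M).2.2.1 (SAs lam Rf A f M).2.2.2 B f k).2.1.1,
          a < (SAs (SAs lam Rf A f M).2.2.1 (SAs lam Rf A f M).2.2.2 B f k).2.1.2 b)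
      ∧ Disjoint (SAs lam Rf A f k).2.1.1
          (SAs (SAs lam Rf A f M).2.2.1 (SAs lam Rf A f M).2.2.2 B f k).2.1.1
      ∧ (∀ b ∈ (SAs lam Rf A f k).2.1.1, (SAs lam Rf A f k).2.1.2 b ≤ a) := by
  have hADB : Disjoint A B := Finset.disjoint_left.2 fun b hbA hbB => by
    have h1 := hAval b hbA; have h2 := hBval b hbB; omega
  have hAlev : ∀ i, Nonadj (A.filter (fun b => f b = i)) := fun i =>
    (hABlev i).mono (Finset.filter_subset_filter _ Finset.subset_union_left)
  have hBlev : ∀ i, Nonadj (B.filter (fun b => f b = i)) := fun i =>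
    (hABlev i).mono (Finset.filter_subset_filter _ Finset.subset_union_right)
  have hAdisj : Disjoint A lam := hABdisj.mono_left Finset.subset_union_left
  have hBdisj : Disjoint B lam := hABdisj.mono_left Finset.subset_union_right
  have SFA := SAfacts_all hmax hsurj hpos hRlev hAlev hAdisj
  have SFL := SAfacts_all hmax hsurj hpos hRlev hABlev hABdisj
  have SFM := SFA M le_rfl
  have hmaxH := H_max SFM
  have hsurjH := H_surj SFM
  have hposH := H_pos SFM
  have hRlevH := H_lev SFM
  have hBHdisj : Disjoint B (SAs lam Rf A f M).2.2.1 := by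
    rw [Finset.disjoint_right]
    intro b hbH hbB
    rcases Finset.mem_union.1 (H_sub SFM hbH) with hbl | hbA
    · exact Finset.disjoint_left.1 hBdisj hbB hbl
    · exact Finset.disjoint_left.1 hADB hbA hbB
  intro k
  induction k with
  | zero => exact fun _ => ⟨rfl, fun _ _ => rfl, fun _ _ => rfl, hBval, hADB, hAval⟩
  | succ k ih =>
      intro hk1
      have hk : k < M := hk1
      obtain ⟨g1, g2, g3, g4, g7, g8⟩ := ih (le_of_lt hk)
      have hstepL := SAs_Ustep (A := A ∪ B) (f := f) hmax hsurj hpos hk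
      have hstepA := SAs_Ustep (A := A) (f := f) hmax hsurj hpos hk
      have hstepB := SAs_Ustep (lam := (SAs lam Rf A f M).2.2.1)
        (Rf := (SAs lam Rf A f M).2.2.2) (A := B) (f := f) hmaxH hsurjH hposH hk
      rw [g1] at hstepL
      have heAk := eSet_eq (A := A) (f := f) hmax hsurj hpos hk
      rw [H_filter SFM hk, heAk] at hstepB
      have hULlev : ∀ i, Nonadj
          (((SAs lam Rf A f k).2.1.1
              ∪ (SAs (SAs lam Rf A f M).2.2.1 (SAs lam Rf A f M).2.2.2 B f k).2.1.1).filter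
            (fun b => (SAs lam Rf (A ∪ B) f k).2.1.2 b = i)) := by
        intro i
        have h := (SFL k (le_of_lt hk)).lev i
        rw [g1] at h
        exact h
      have hxsdisj : Disjoint (lam.filter (fun b => Rf b = M - k))
          ((SAs lam Rf A f k).2.1.1
            ∪ (SAs (SAs lam Rf A f M).2.2.1 (SAs lam Rf A f M).2.2.2 B f k).2.1.1) := by
        rw [← g1, Finset.disjoint_right]
        intro b hbU hbx
        have hbu := (SFL k (le_of_lt hk)).usub hbU
        simp only [Finset.mem_union, Finset.mem_filter] at hbu hbx
        rcases hbu with hbab | ⟨_, hgt⟩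
        · exact Finset.disjoint_left.1 hABdisj (Finset.mem_union.2 hbab) hbx.1
        · omega
      have GIS := GI_step hULlev hxsdisj (hRlev (M - k)) g2 g3 g4 g7 g8
      refine ⟨?_, ?_, ?_, ?_, ?_, ?_⟩
      · rw [hstepL, hstepA, hstepB]; exact GIS.1
      · rw [hstepL, hstepA]; exact GIS.2.1
      · rw [hstepL, hstepB]; exact GIS.2.2.1
      · rw [hstepB]; exact GIS.2.2.2.1
      · rw [hstepA, hstepB]; exact GIS.2.2.2.2.1
      · rw [hstepA]; exact GIS.2.2.2.2.2

end Stmt13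
/-- splitting K-infusion at the value `a`:
`K-infusion₁(R,T) = K-infusion₁(R,A) ∪ K-infusion₁(K-infusion₂(R,A), B)` where
`A` consists of the entries of `T` that are `≤ a` and `B` is the rest. -/
theorem stmt13 (lam nu : Finset Box) (Rf f : Box → ℕ) (a : ℕ)
    (hlam : IsYoung lam) (hnu : IsYoung nu) (hsub : lam ⊆ nu)
    (hR : IsIncTab lam Rf) (hT : IsIncTab (nu \ lam) f) :
    (KInfusion lam Rf (nu \ lam) f).1.1
      = (KInfusion lam Rf ((nu \ lam).filter (fun b => f b ≤ a)) f).1.1 ∪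
        (KInfusion (KInfusion lam Rf ((nu \ lam).filter (fun b => f b ≤ a)) f).2.1
                   (KInfusion lam Rf ((nu \ lam).filter (fun b => f b ≤ a)) f).2.2
                   ((nu \ lam).filter (fun b => a < f b)) f).1.1 ∧
    (∀ b ∈ (KInfusion lam Rf ((nu \ lam).filter (fun b => f b ≤ a)) f).1.1,
      (KInfusion lam Rf (nu \ lam) f).1.2 b
        = (KInfusion lam Rf ((nu \ lam).filter (fun b => f b ≤ a)) f).1.2 b) ∧
    (∀ b ∈ (KInfusion (KInfusion lam Rf ((nu \ lam).filter (fun b => f b ≤ a)) f).2.1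
                      (KInfusion lam Rf ((nu \ lam).filter (fun b => f b ≤ a)) f).2.2
                      ((nu \ lam).filter (fun b => a < f b)) f).1.1,
      (KInfusion lam Rf (nu \ lam) f).1.2 b
        = (KInfusion (KInfusion lam Rf ((nu \ lam).filter (fun b => f b ≤ a)) f).2.1
                     (KInfusion lam Rf ((nu \ lam).filter (fun b => f b ≤ a)) f).2.2
                     ((nu \ lam).filter (fun b => a < f b)) f).1.2 b) := by
  obtain ⟨hRinc, hRpos, hRsurj⟩ := hR
  obtain ⟨hTinc, hTpos, hTsurj⟩ := hT
  have hAB : (nu \ lam).filter (fun b => f b ≤ a) ∪ (nu \ lam).filter (fun b => a < f b)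
      = nu \ lam := by
    ext b
    simp only [Finset.mem_union, Finset.mem_filter]
    constructor
    · rintro (⟨h, _⟩ | ⟨h, _⟩) <;> exact h
    · intro h
      by_cases hle : f b ≤ a
      · exact Or.inl ⟨h, hle⟩
      · exact Or.inr ⟨h, by omega⟩
  have hRlev : ∀ i, Stmt13.Nonadj (lam.filter (fun b => Rf b = i)) :=
    fun i => Stmt13.nonadj_level_of_incr hRinc i
  have hABlev : ∀ i, Stmt13.Nonadj (((nu \ lam).filter (fun b => f b ≤ a)
      ∪ (nu \ lam).filter (fun b => a < f b)).filter (fun b => f b = i)) := by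
    intro i
    rw [hAB]
    exact Stmt13.nonadj_level_of_incr hTinc i
  have hABdisj : Disjoint ((nu \ lam).filter (fun b => f b ≤ a)
      ∪ (nu \ lam).filter (fun b => a < f b)) lam := by
    rw [hAB]
    exact Finset.sdiff_disjoint
  have hAval : ∀ b ∈ (nu \ lam).filter (fun b => f b ≤ a), f b ≤ a :=
    fun b hb => (Finset.mem_filter.1 hb).2
  have hBval : ∀ b ∈ (nu \ lam).filter (fun b => a < f b), a < f b :=
    fun b hb => (Finset.mem_filter.1 hb).2
  obtain ⟨k1, k2, k3, _⟩ :=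
    Stmt13.GI_all rfl hRsurj hRpos hRlev hABlev hAval hBval hABdisj (maxEntry lam Rf) le_rfl
  have SFM := Stmt13.SAfacts_all rfl hRsurj hRpos hRlev
      (fun i => (hABlev i).mono (Finset.filter_subset_filter _ Finset.subset_union_left))
      (hABdisj.mono_left Finset.subset_union_left) (maxEntry lam Rf) le_rfl
  have hmaxH := Stmt13.H_max SFM
  have hLrw : Stmt13.SAs lam Rf (nu \ lam) f (maxEntry lam Rf)
      = Stmt13.SAs lam Rf ((nu \ lam).filter (fun b => f b ≤ a)
          ∪ (nu \ lam).filter (fun b => a < f b)) f (maxEntry lam Rf) := by rw [hAB]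
  have e2 : ∀ (T : Finset Box) (g : Box → ℕ) (D : Finset Box) (u : Box → ℕ),
      KInfusion T g D u = ((Stmt13.SAs T g D u (maxEntry T g)).2.1,
        (Stmt13.SAs T g D u (maxEntry T g)).2.2) := fun _ _ _ _ => rfl
  simp only [e2]
  rw [hmaxH, hLrw]
  exact ⟨k1, k2, k3⟩
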